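/- Every member of the family F_1' = { 1 - Σ_{i=1}^{2n} (-1)^i k_i x_i : all k_i ∈ ℤ nonzero } of affine-linear polynomials in 2n ≥ 2 variables is strongly irreducible: for all positive integers t_1,...,t_{2n}, the polynomial 1 - Σ (-1)^i k_i x_i^{t_i} is irreducible in ℤ[x_1,...,x_{2n}]. -/

import Mathlib

open MvPolynomial

section Aux
open Polynomial

/-- A divisor of a nonzero constant in `MvPolynomial (Fin k) ℤ` is a constant. -/
lemma dvd_C_eq_C : ∀ (k : ℕ) (p : MvPolynomial (Fin k) ℤ) (a : ℤ), a ≠ 0 →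
    p ∣ MvPolynomial.C a → ∃ b : ℤ, p = MvPolynomial.C b := by
  intro k
  induction k with
  | zero =>
    intro p a _ _
    obtain ⟨b, rfl⟩ := MvPolynomial.C_surjective (Fin 0) p
    exact ⟨b, rfl⟩
  | succ k ih =>
    intro p a ha hpa
    set φ := MvPolynomial.finSuccEquiv ℤ k with hφ
    have h1 : φ p ∣ Polynomial.C (MvPolynomial.C a) := by
      have := map_dvd φ hpa
      simpa using this
    have hCa : (Polynomial.C (MvPolynomial.C a) : Polynomial (MvPolynomial (Fin k) ℤ)) ≠ 0 := by
      simp [ha]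
    have hdeg : (φ p).natDegree = 0 :=
      Nat.le_zero.mp (by simpa using Polynomial.natDegree_le_of_dvd h1 hCa)
    have hp' : φ p = Polynomial.C ((φ p).coeff 0) :=
      Polynomial.eq_C_of_natDegree_le_zero hdeg.le
    obtain ⟨h, hh⟩ := h1
    have hdv : (φ p).coeff 0 ∣ MvPolynomial.C a := by
      refine ⟨h.coeff 0, ?_⟩
      have h3 := congrArg (fun q => Polynomial.coeff q 0) hh
      rw [hp'] at h3
      simpa [Polynomial.coeff_C_mul] using h3
    obtain ⟨b, hb⟩ := ih ((φ p).coeff 0) a ha hdv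
    refine ⟨b, ?_⟩
    apply φ.injective
    rw [hp', hb]
    have := MvPolynomial.finSuccEquiv_comp_C_eq_C (R := ℤ) k
    have h2 : (MvPolynomial.finSuccEquiv ℤ k).symm (Polynomial.C (MvPolynomial.C b)) = MvPolynomial.C b :=
      congrFun (congrArg (fun f => f.toFun) this) b
    calc Polynomial.C (MvPolynomial.C b) = φ (φ.symm (Polynomial.C (MvPolynomial.C b))) := (φ.apply_symm_apply _).symm
    _ = φ (MvPolynomial.C b) := by rw [h2]

lemma univ_sep (c : ℚ) (hc : c ≠ 0) (t : ℕ) (ht : 0 < t) :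
    ((1 : Polynomial ℚ) + Polynomial.C c * Polynomial.X ^ t).Separable := by
  refine ⟨1, -(Polynomial.C ((t : ℚ))⁻¹ * Polynomial.X), ?_⟩
  have hd : derivative ((1 : Polynomial ℚ) + Polynomial.C c * Polynomial.X ^ t)
      = Polynomial.C (c * t) * Polynomial.X ^ (t - 1) := by
    rw [derivative_add, derivative_one, zero_add, derivative_C_mul_X_pow]
  rw [hd]
  have hx : (Polynomial.X : Polynomial ℚ) * Polynomial.X ^ (t - 1) = Polynomial.X ^ t := by
    rw [mul_comm, ← pow_succ]
    congr 1
    omega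
  have ht' : (t : ℚ) ≠ 0 := Nat.cast_ne_zero.mpr ht.ne'
  have key : ((t:ℚ))⁻¹ * (c * t) = c := by field_simp
  have h2 : Polynomial.C ((t:ℚ))⁻¹ * Polynomial.X * (Polynomial.C (c * ↑t) * Polynomial.X ^ (t-1))
      = Polynomial.C c * Polynomial.X ^ t := by
    calc Polynomial.C ((t:ℚ))⁻¹ * Polynomial.X * (Polynomial.C (c * ↑t) * Polynomial.X ^ (t-1))
        = Polynomial.C (((t:ℚ))⁻¹ * (c * ↑t)) * (Polynomial.X * Polynomial.X ^ (t-1)) := by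
          simp only [Polynomial.C_mul]; ring
      _ = Polynomial.C c * Polynomial.X ^ t := by rw [key, hx]
  rw [one_mul, neg_mul, h2]
  ring

lemma univ_good (c : ℤ) (hc : c ≠ 0) (t : ℕ) (ht : 0 < t) :
    ∃ q : Polynomial ℤ, Prime q ∧ q ∣ (1 + Polynomial.C c * Polynomial.X ^ t) ∧
      ¬ (q * q ∣ (1 + Polynomial.C c * Polynomial.X ^ t)) := by
  set f : Polynomial ℤ := 1 + Polynomial.C c * Polynomial.X ^ t with hf
  have hC : (Polynomial.C c : Polynomial ℤ) ≠ 0 := by simpa using hc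
  have hdeg : f.degree = t := by
    rw [hf]
    rw [Polynomial.degree_add_eq_right_of_degree_lt]
    · exact Polynomial.degree_C_mul_X_pow t hc
    · rw [Polynomial.degree_C_mul_X_pow t hc]
      calc (1 : Polynomial ℤ).degree ≤ 0 := Polynomial.degree_one_le
      _ < (t : WithBot ℕ) := by exact_mod_cast WithBot.coe_lt_coe.mpr ht
  have hf0 : f ≠ 0 := fun h => by simp [h] at hdeg
  have hfu : ¬ IsUnit f := by
    intro h
    have := Polynomial.natDegree_eq_zero_of_isUnit h
    rw [Polynomial.natDegree_eq_zero_iff_degree_le_zero, hdeg] at this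
    exact absurd (by exact_mod_cast this) (by omega : ¬ (t : ℕ) ≤ 0)
  obtain ⟨q, hq, hqf⟩ := WfDvdMonoid.exists_irreducible_factor hfu hf0
  refine ⟨q, UniqueFactorizationMonoid.irreducible_iff_prime.mp hq, hqf, ?_⟩
  intro hsq
  -- map to ℚ
  have hmap : f.map (Int.castRingHom ℚ) = 1 + Polynomial.C (c : ℚ) * Polynomial.X ^ t := by
    simp [hf]
  have hsf : Squarefree (f.map (Int.castRingHom ℚ)) := by
    rw [hmap]
    exact (univ_sep (c : ℚ) (by exact_mod_cast hc) t ht).squarefree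
  have : IsUnit (q.map (Int.castRingHom ℚ)) := by
    apply hsf
    have := Polynomial.map_dvd (Int.castRingHom ℚ) hsq
    simpa [Polynomial.map_mul] using this
  have hdq : q.natDegree = 0 := by
    have h1 := Polynomial.natDegree_eq_zero_of_isUnit this
    rwa [Polynomial.natDegree_map_eq_of_injective
      (f := Int.castRingHom ℚ) (fun a b h => by simpa using h) q] at h1
  -- q is a constant dividing f whose constant coefficient is 1
  have hq' : q = Polynomial.C (q.coeff 0) := Polynomial.eq_C_of_natDegree_le_zero hdq.le
  obtain ⟨h, hh⟩ := hqf
  have hcoeff : f.coeff 0 = 1 := by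
    simp [hf, Polynomial.coeff_X_pow, ht.ne]
  have : q.coeff 0 ∣ (1 : ℤ) := by
    refine ⟨h.coeff 0, ?_⟩
    have h3 := congrArg (fun p => Polynomial.coeff p 0) hh
    rw [hq'] at h3
    simpa [Polynomial.coeff_C_mul, hcoeff] using h3
  have : IsUnit q := by
    rw [hq']
    exact (isUnit_C).mpr (isUnit_of_dvd_one this)
  exact hq.not_isUnit this

lemma finSuccEquiv_C' (n : ℕ) (a : ℤ) :
    MvPolynomial.finSuccEquiv ℤ n (MvPolynomial.C a) = Polynomial.C (MvPolynomial.C a) := by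
  simp [MvPolynomial.finSuccEquiv_apply]

noncomputable def QQ' (k : ℕ) (c : Fin k → ℤ) (t : Fin k → ℕ) : MvPolynomial (Fin k) ℤ :=
  1 + ∑ i, MvPolynomial.C (c i) * MvPolynomial.X i ^ t i

lemma finSuccEquiv_QQ (m : ℕ) (c : Fin (m+2) → ℤ) (t : Fin (m+2) → ℕ) :
    MvPolynomial.finSuccEquiv ℤ (m+1) (QQ' (m+2) c t) =
      Polynomial.C (QQ' (m+1) (c ∘ Fin.succ) (t ∘ Fin.succ)) +
        Polynomial.C (MvPolynomial.C (c 0)) * Polynomial.X ^ (t 0) := by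
  rw [QQ', map_add, map_one, map_sum, Fin.sum_univ_succ]
  rw [map_mul, map_pow, MvPolynomial.finSuccEquiv_X_zero, finSuccEquiv_C']
  have h : ∀ i : Fin (m+1), MvPolynomial.finSuccEquiv ℤ (m+1)
      (MvPolynomial.C (c i.succ) * MvPolynomial.X i.succ ^ t i.succ)
      = Polynomial.C (MvPolynomial.C (c i.succ) * MvPolynomial.X i ^ t i.succ) := by
    intro i
    rw [map_mul, map_pow, MvPolynomial.finSuccEquiv_X_succ, finSuccEquiv_C',
      ← Polynomial.C_pow, ← Polynomial.C_mul]
  simp only [h]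
  rw [QQ', map_add, map_one, map_sum]
  simp only [Function.comp_apply]
  ring

lemma constantCoeff_QQ' (k : ℕ) (c : Fin k → ℤ) (t : Fin k → ℕ) (ht : ∀ i, 0 < t i) :
    constantCoeff (QQ' k c t) = 1 := by
  have h : ∀ i : Fin k, MvPolynomial.constantCoeff (MvPolynomial.C (c i) * MvPolynomial.X i ^ t i) = 0 := by
    intro i
    simp [map_pow, constantCoeff_X, zero_pow (ht i).ne']
  simp only [QQ', map_add, map_one, map_sum, h, Finset.sum_const_zero, add_zero]

lemma QQ_ne_zero (k : ℕ) (c : Fin k → ℤ) (t : Fin k → ℕ) (ht : ∀ i, 0 < t i) :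
    QQ' k c t ≠ 0 := by
  intro h
  have := constantCoeff_QQ' k c t ht
  rw [h] at this
  simp at this

lemma C_dvd_QQp (k : ℕ) (c : Fin k → ℤ) (t : Fin k → ℕ) (ht : ∀ i, 0 < t i)
    (b : ℤ) (hb : MvPolynomial.C b ∣ QQ' k c t) : IsUnit b := by
  obtain ⟨w, hw⟩ := hb
  have := congrArg MvPolynomial.constantCoeff hw
  rw [constantCoeff_QQ' k c t ht] at this
  simp only [map_mul, constantCoeff_C] at this
  exact isUnit_of_dvd_one ⟨constantCoeff w, this⟩

noncomputable def e1 : MvPolynomial (Fin 1) ℤ ≃ₐ[ℤ] Polynomial ℤ :=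
  (MvPolynomial.finSuccEquiv ℤ 0).trans (Polynomial.mapAlgEquiv (MvPolynomial.isEmptyAlgEquiv ℤ (Fin 0)))

lemma e1_QQ (c : Fin 1 → ℤ) (t : Fin 1 → ℕ) :
    e1 (QQ' 1 c t) = 1 + Polynomial.C (c 0) * Polynomial.X ^ (t 0) := by
  have hC : ∀ a : ℤ, e1 (MvPolynomial.C a) = Polynomial.C a := by
    intro a
    have h1 : (MvPolynomial.C a : MvPolynomial (Fin 1) ℤ) = algebraMap ℤ _ a := rfl
    rw [h1, e1.commutes]
    simp [algebraMap_int_eq, Polynomial.C_eq_intCast]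
  have hX : e1 (MvPolynomial.X 0) = Polynomial.X := by
    rw [e1]
    simp [MvPolynomial.finSuccEquiv_X_zero, Polynomial.mapAlgEquiv]
  rw [QQ', Fin.sum_univ_one, map_add, map_one, map_mul, map_pow, hC, hX]

lemma master (m : ℕ) : ∀ (c : Fin (m+1) → ℤ), (∀ i, c i ≠ 0) → ∀ (t : Fin (m+1) → ℕ),
    (∀ i, 0 < t i) →
    (∃ q, Prime q ∧ q ∣ QQ' (m+1) c t ∧ ¬ q * q ∣ QQ' (m+1) c t) ∧
    (0 < m → Irreducible (QQ' (m+1) c t)) := by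
  induction m with
  | zero =>
    intro c hc t ht
    refine ⟨?_, by omega⟩
    obtain ⟨q', hq', hq'd, hq'2⟩ := univ_good (c 0) (hc 0) (t 0) (ht 0)
    set em : MvPolynomial (Fin 1) ℤ ≃* Polynomial ℤ := e1.toRingEquiv.toMulEquiv with hem
    refine ⟨e1.symm q', ?_, ?_, ?_⟩
    · rw [← MulEquiv.prime_iff em]
      have : em (e1.symm q') = q' := e1.apply_symm_apply q'
      rwa [this]
    · have hd : q' ∣ e1 (QQ' 1 c t) := by rw [e1_QQ c t]; exact hq'd
      have h := _root_.map_dvd e1.symm.toAlgHom hd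
      simpa using h
    · intro hdvd
      have h := _root_.map_dvd e1.toAlgHom hdvd
      simp only [AlgHom.coe_coe, AlgEquiv.toAlgHom_eq_coe, AlgEquiv.coe_algHom, map_mul] at h
      rw [e1.apply_symm_apply, e1_QQ c t] at h
      exact hq'2 h
  | succ m ih =>
    intro c hc t ht
    set B := QQ' (m+1) (c ∘ Fin.succ) (t ∘ Fin.succ) with hB
    have hBne : B ≠ 0 := QQ_ne_zero _ _ _ (fun i => ht i.succ)
    obtain ⟨⟨q, hq, hqB, hq2⟩, -⟩ := ih (c ∘ Fin.succ) (fun i => hc i.succ)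
      (t ∘ Fin.succ) (fun i => ht i.succ)
    have hc0 : MvPolynomial.C (c 0) ≠ (0 : MvPolynomial (Fin (m+1)) ℤ) := by
      simpa using hc 0
    set G : Polynomial (MvPolynomial (Fin (m+1)) ℤ) :=
      Polynomial.C B + Polynomial.C (MvPolynomial.C (c 0)) * Polynomial.X ^ (t 0) with hG
    have ht0 : 0 < t 0 := ht 0
    have hGdeg : G.degree = t 0 := by
      rw [hG, Polynomial.degree_add_eq_right_of_degree_lt, Polynomial.degree_C_mul_X_pow _ hc0]
      rw [Polynomial.degree_C_mul_X_pow _ hc0]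
      calc (Polynomial.C B).degree ≤ 0 := Polynomial.degree_C_le
      _ < (t 0 : WithBot ℕ) := by exact_mod_cast ht0
    have hGnat : G.natDegree = t 0 := Polynomial.natDegree_eq_of_degree_eq_some hGdeg
    have hcoeff : ∀ n, G.coeff n =
        (if n = 0 then B else 0) + (if n = t 0 then MvPolynomial.C (c 0) else 0) := by
      intro n
      rw [hG, Polynomial.coeff_add, Polynomial.coeff_C, Polynomial.coeff_C_mul_X_pow]
    have hlead : G.leadingCoeff = MvPolynomial.C (c 0) := by
      rw [Polynomial.leadingCoeff, hGnat, hcoeff]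
      simp [ht0.ne']
    -- key fact: q does not divide any nonzero constant
    have hqnc : ∀ a : ℤ, a ≠ 0 → ¬ q ∣ MvPolynomial.C a := by
      intro a ha hd
      obtain ⟨b, rfl⟩ := dvd_C_eq_C _ q a ha hd
      exact hq.not_unit ((C_dvd_QQp _ _ _ (fun i => ht i.succ) b hqB).map MvPolynomial.C)
    set P : Ideal (MvPolynomial (Fin (m+1)) ℤ) := Ideal.span {q} with hP
    have hPprime : P.IsPrime := (Ideal.span_singleton_prime hq.ne_zero).mpr hq
    have hGirr : Irreducible G := by
      apply Polynomial.irreducible_of_eisenstein_criterion hPprime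
      · rw [hlead, hP, Ideal.mem_span_singleton]
        exact hqnc (c 0) (hc 0)
      · intro n hn
        rw [hGdeg] at hn
        have hn' : n < t 0 := by exact_mod_cast hn
        rw [hcoeff]
        rcases eq_or_ne n 0 with rfl | h0
        · simp only [if_pos rfl, if_neg (by omega : ¬ (0:ℕ) = t 0), add_zero]
          exact Ideal.mem_span_singleton.mpr hqB
        · simp only [if_neg h0, if_neg (by omega : ¬ n = t 0), add_zero]
          exact P.zero_mem
      · rw [hGdeg]; exact_mod_cast ht0
      · rw [hcoeff]
        simp only [if_pos rfl, if_neg (by omega : ¬ (0:ℕ) = t 0), add_zero]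
        rw [hP, Ideal.span_singleton_pow, Ideal.mem_span_singleton, pow_two]
        exact hq2
      · intro r hr
        by_contra hnr
        obtain ⟨h, hh⟩ := hr
        have hval : ∀ n, G.coeff n = r * h.coeff n := by
          intro n; rw [hh, Polynomial.coeff_C_mul]
        have hvB : B = r * h.coeff 0 := by
          have := hval 0
          rwa [hcoeff 0, if_pos rfl, if_neg (by omega : ¬ (0:ℕ) = t 0), add_zero] at this
        have hvc : MvPolynomial.C (c 0) = r * h.coeff (t 0) := by
          have := hval (t 0)
          rwa [hcoeff (t 0), if_neg ht0.ne', if_pos rfl, zero_add] at this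
        have hr0 : r ≠ 0 := by
          intro h0; rw [h0, zero_mul] at hvc; exact hc0 hvc
        obtain ⟨p, hp, hpr⟩ := WfDvdMonoid.exists_irreducible_factor hnr hr0
        obtain ⟨b, rfl⟩ := dvd_C_eq_C _ p (c 0) (hc 0) (hpr.trans ⟨h.coeff (t 0), hvc⟩)
        exact hp.not_isUnit
          ((C_dvd_QQp _ _ _ (fun i => ht i.succ) b (hpr.trans ⟨h.coeff 0, hvB⟩)).map MvPolynomial.C)
    have hQirr : Irreducible (QQ' (m+2) c t) := by
      refine (MulEquiv.irreducible_iff (MvPolynomial.finSuccEquiv ℤ (m+1))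
        (x := QQ' (m+2) c t)).mp ?_
      rw [finSuccEquiv_QQ m c t]
      exact hGirr
    refine ⟨⟨QQ' (m+2) c t, UniqueFactorizationMonoid.irreducible_iff_prime.mp hQirr,
      dvd_refl _, ?_⟩, fun _ => hQirr⟩
    rintro ⟨w, hw⟩
    have hne := QQ_ne_zero (m+2) c t ht
    have : QQ' (m+2) c t * 1 = QQ' (m+2) c t * (QQ' (m+2) c t * w) := by
      rw [mul_one, ← mul_assoc]; exact hw
    have := mul_left_cancel₀ hne this
    exact hQirr.not_isUnit (IsUnit.of_mul_eq_one _ this.symm)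

lemma finalN (N : ℕ) (hN : 2 ≤ N) (c : Fin N → ℤ) (hc : ∀ i, c i ≠ 0) (t : Fin N → ℕ)
    (ht : ∀ i, 0 < t i) : Irreducible (QQ' N c t) := by
  obtain ⟨m, rfl⟩ : ∃ m, N = m + 1 := ⟨N - 1, by omega⟩
  exact (master m c hc t ht).2 (by omega)

end Aux

/-- Every member of the family
`F₁' = { 1 - ∑_{i=1}^{2n} (-1)^i kᵢ xᵢ : all kᵢ ∈ ℤ nonzero }` of affine-linear
polynomials in `2n ≥ 2` variables is strongly irreducible: for all positive integers
`t₁,…,t_{2n}` the polynomial `1 - ∑ (-1)^i kᵢ xᵢ^{tᵢ}` is irreducible in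
`ℤ[x₁,…,x_{2n}]`. -/
theorem stmt13 {n : ℕ} (hn : 0 < n) (k : Fin (2 * n) → ℤ) (hk : ∀ i, k i ≠ 0) :
    ∀ t : Fin (2 * n) → ℕ, (∀ i, 0 < t i) →
      Irreducible ((1 : MvPolynomial (Fin (2 * n)) ℤ) -
        ∑ i : Fin (2 * n), C ((-1) ^ ((i : ℕ) + 1) * k i) * X i ^ t i) := by
  intro t ht
  have hc : ∀ i : Fin (2 * n), ((-1 : ℤ)) ^ (i : ℕ) * k i ≠ 0 := fun i =>
    mul_ne_zero (pow_ne_zero _ (by norm_num)) (hk i)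
  have h := finalN (2 * n) (by omega) (fun i => (-1) ^ (i : ℕ) * k i) hc t ht
  have he : (1 : MvPolynomial (Fin (2 * n)) ℤ) -
      ∑ i : Fin (2 * n), C ((-1) ^ ((i : ℕ) + 1) * k i) * X i ^ t i
      = QQ' (2 * n) (fun i => (-1) ^ (i : ℕ) * k i) t := by
    rw [QQ', sub_eq_add_neg, ← Finset.sum_neg_distrib]
    congr 1
    apply Finset.sum_congr rfl
    intro i _
    have h2 : ((-1 : ℤ)) ^ ((i : ℕ) + 1) * k i = -(((-1 : ℤ)) ^ (i : ℕ) * k i) := by ring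
    rw [h2, map_neg, neg_mul, neg_neg]
  rw [he]
  exact h
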